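/- Let V be a valuation domain with quotient field K, with completion V̂ and K̂ with respect to the v-adic topology. Let W̃ be an extension of V̂ to K̂(X) such that the valuation w̃ satisfies w̃(X) > v(a) for some a ∈ K, and set W = W̃ ∩ K(X) with maximal ideals M̃, M respectively. Then the canonical map induces an isomorphism (W ∩ K[X])/(M ∩ K[X]) ≅ (W̃ ∩ K̂[X])/(M̃ ∩ K̂[X]). -/

import Mathlib

/-- Let `K̂ ⊇ K` be the completion of `K` with respect to `v` (modelled
by a valued field extension `(L, v̂)` of `(K, v)` in which `K` is dense), and let `w̃` be
an extension of `v̂` to `K̂(X)` with `w̃(X) > v(a)` for some `a ∈ K` (multiplicatively,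
`w̃(X) < v̂(a)`).  Put `W = W̃ ∩ K(X)`, with maximal ideals `M̃, M`.  Then the canonical
map `(W ∩ K[X])/(M ∩ K[X]) → (W̃ ∩ K̂[X])/(M̃ ∩ K̂[X])` is an isomorphism: every
`f ∈ W̃ ∩ K̂[X]` is congruent modulo `M̃` to some `g ∈ W ∩ K[X]` (the converse
inclusion of residue rings being trivial). -/
theorem stmt_10 {K L Γ₀ : Type*} [Field K] [Field L]
    [LinearOrderedCommGroupWithZero Γ₀]
    (ι : K →+* L) (v : Valuation K Γ₀) (vhat : Valuation L Γ₀)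
    (hext : ∀ x : K, vhat (ι x) = v x)
    (hdense : ∀ (y : L) (γ : Γ₀), γ ≠ 0 → ∃ a : K, vhat (y - ι a) < γ)
    (wt : Valuation (RatFunc L) Γ₀)
    (hwt : ∀ x : L, wt (RatFunc.C x) = vhat x)
    (a : K) (ha : a ≠ 0) (hX : wt RatFunc.X < vhat (ι a)) :
    ∀ f : Polynomial L, wt (algebraMap (Polynomial L) (RatFunc L) f) ≤ 1 →
      ∃ g : Polynomial K,
        wt (algebraMap (Polynomial L) (RatFunc L) (g.map ι)) ≤ 1 ∧
        wt (algebraMap (Polynomial L) (RatFunc L) (f - g.map ι)) < 1 := by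
  intro f hf
  set α := v a with hα
  have hα0 : α ≠ 0 := v.ne_zero_iff.mpr ha
  have hchoice : ∀ i : ℕ, ∃ ai : K, vhat (f.coeff i - ι ai) < α⁻¹ ^ i := fun i =>
    hdense _ _ (pow_ne_zero i (inv_ne_zero hα0))
  choose c hc using hchoice
  set n := f.natDegree + 1 with hn
  set g : Polynomial K := ∑ i ∈ Finset.range n, Polynomial.C (c i) * Polynomial.X ^ i with hg
  have hmap : g.map ι = ∑ i ∈ Finset.range n, Polynomial.C (ι (c i)) * Polynomial.X ^ i := by
    simp [hg, Polynomial.map_sum]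
  have hfs : f = ∑ i ∈ Finset.range n, Polynomial.C (f.coeff i) * Polynomial.X ^ i := by
    conv_lhs => rw [f.as_sum_range' n (by omega)]
    simp [Polynomial.C_mul_X_pow_eq_monomial]
  have hdiff : f - g.map ι
      = ∑ i ∈ Finset.range n, Polynomial.C (f.coeff i - ι (c i)) * Polynomial.X ^ i := by
    rw [hmap]
    conv_lhs => rw [hfs]
    rw [← Finset.sum_sub_distrib]
    simp [sub_mul]
  have ht : wt RatFunc.X ≤ α := by
    rw [hext] at hX; exact le_of_lt hX
  have key : wt (algebraMap (Polynomial L) (RatFunc L) (f - g.map ι)) < 1 := by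
    rw [hdiff, map_sum]
    apply Valuation.map_sum_lt _ one_ne_zero
    intro i _
    have heq : wt (algebraMap (Polynomial L) (RatFunc L)
        (Polynomial.C (f.coeff i - ι (c i)) * Polynomial.X ^ i))
        = vhat (f.coeff i - ι (c i)) * (wt RatFunc.X) ^ i := by
      rw [map_mul, map_pow, Valuation.map_mul, Valuation.map_pow,
        RatFunc.algebraMap_C, RatFunc.algebraMap_X, hwt]
    rw [heq]
    calc vhat (f.coeff i - ι (c i)) * (wt RatFunc.X) ^ i
        ≤ vhat (f.coeff i - ι (c i)) * α ^ i :=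
          mul_le_mul_right (pow_le_pow_left' ht i) _
      _ < α⁻¹ ^ i * α ^ i := by
          rw [mul_comm, mul_comm (α⁻¹ ^ i)]
          exact mul_lt_mul_of_pos_left (hc i) (zero_lt_iff.mpr (pow_ne_zero i hα0))
      _ = 1 := by rw [← mul_pow, inv_mul_cancel₀ hα0, one_pow]
  refine ⟨g, ?_, key⟩
  have hrw : algebraMap (Polynomial L) (RatFunc L) (g.map ι)
      = algebraMap (Polynomial L) (RatFunc L) f
        - algebraMap (Polynomial L) (RatFunc L) (f - g.map ι) := by
    rw [map_sub]; ring
  rw [hrw]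
  exact le_trans (Valuation.map_sub _ _ _) (max_le hf (le_of_lt key))
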